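/- arXiv:2409.13601 — 2 statements merged into one kernel-verified Lean document; each statement's English description precedes it below -/
import Mathlib

section
/- Let M be a unitary projective co-representation of G of dimension n. For any n×n complex matrix Q₀, define q_r = Σ_{g∈G} M(g)·Q₀^{σ(g)}·M(g)† and Q_r = q_r + q_r†. Then Q_r is Hermitian and satisfies M(g)·Q_r^{σ(g)} = Q_r·M(g) for all g ∈ G, so each eigenspace of Q_r is an invariant subspace. Moreover, there exists a choice of Q₀ such that the eigenspaces of the resulting Q_r are pairwise orthogonal invariant subspaces summing to ℂⁿ on each of which the restricted co-representation is irreducible. -/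
set_option linter.unusedSectionVars false
open Matrix Complex BigOperators
noncomputable section

def mconj {ι : Type*} (u : ℤˣ) (X : Matrix ι ι ℂ) : Matrix ι ι ℂ :=
  if u = 1 then X else X.map (starRingEnd ℂ)

def vconj {ι : Type*} (u : ℤˣ) (v : ι → ℂ) : ι → ℂ :=
  if u = 1 then v else star v

/-- scalar conjugation -/
def cconj (u : ℤˣ) (c : ℂ) : ℂ := if u = 1 then c else (starRingEnd ℂ) c

section basic
variable {ι : Type*} [Fintype ι] [DecidableEq ι]

lemma vconj_vconj (u : ℤˣ) (v : ι → ℂ) : vconj u (vconj u v) = v := by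
  unfold vconj; split <;> simp

lemma vconj_add (u : ℤˣ) (v w : ι → ℂ) : vconj u (v + w) = vconj u v + vconj u w := by
  unfold vconj; split <;> simp [star_add]

lemma vconj_zero (u : ℤˣ) : vconj u (0 : ι → ℂ) = 0 := by
  unfold vconj; split <;> simp

lemma vconj_smul (u : ℤˣ) (c : ℂ) (v : ι → ℂ) :
    vconj u (c • v) = cconj u c • vconj u v := by
  unfold vconj cconj; split <;> simp [star_smul]

lemma vconj_sum {α : Type*} (u : ℤˣ) (t : Finset α) (f : α → ι → ℂ) :
    vconj u (∑ a ∈ t, f a) = ∑ a ∈ t, vconj u (f a) := by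
  classical
  induction t using Finset.induction_on with
  | empty => simp [vconj_zero]
  | insert _ _ h ih => simp [Finset.sum_insert h, vconj_add, ih]

lemma mconj_mulVec (u : ℤˣ) (X : Matrix ι ι ℂ) (v : ι → ℂ) :
    mconj u X *ᵥ vconj u v = vconj u (X *ᵥ v) := by
  unfold mconj vconj
  split
  · rfl
  · ext i
    simp [Matrix.mulVec, dotProduct, map_sum]

lemma mconj_mul (u : ℤˣ) (X Y : Matrix ι ι ℂ) :
    mconj u (X * Y) = mconj u X * mconj u Y := by
  unfold mconj; split
  · rfl
  · exact Matrix.map_mul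

lemma mconj_mconj (u w : ℤˣ) (X : Matrix ι ι ℂ) :
    mconj u (mconj w X) = mconj (u * w) X := by
  have hu := Int.units_eq_one_or u
  have hw := Int.units_eq_one_or w
  unfold mconj
  rcases hu with h | h <;> rcases hw with h' | h' <;> subst h <;> subst h' <;> simp
  · ext i j; simp

lemma mconj_conjTranspose (u : ℤˣ) (X : Matrix ι ι ℂ) :
    mconj u Xᴴ = (mconj u X)ᴴ := by
  unfold mconj; split
  · rfl
  · ext i j; simp [Matrix.conjTranspose_apply]

lemma mconj_smul (u : ℤˣ) (c : ℂ) (X : Matrix ι ι ℂ) :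
    mconj u (c • X) = cconj u c • mconj u X := by
  unfold mconj cconj; split
  · simp
  · ext i j; simp [Matrix.map_apply]

lemma mconj_sum {α : Type*} (u : ℤˣ) (t : Finset α) (f : α → Matrix ι ι ℂ) :
    mconj u (∑ a ∈ t, f a) = ∑ a ∈ t, mconj u (f a) := by
  unfold mconj; split
  · rfl
  · ext i j
    simp only [Matrix.map_apply, Finset.sum_apply, Matrix.sum_apply, map_sum]

end basic
structure IsCoRep {G : Type*} [Group G] {ι : Type*} [Fintype ι] [DecidableEq ι] (s : G →* ℤˣ)
    (M : G → Matrix ι ι ℂ) (ω : G → G → ℂ) : Prop where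
  isUnit : ∀ g, IsUnit (M g)
  omega_norm : ∀ g1 g2, ‖ω g1 g2‖ = 1
  mul_eq : ∀ g1 g2, M g1 * mconj (s g1) (M g2) = ω g1 g2 • M (g1 * g2)

structure IsUnitaryCoRep {G : Type*} [Group G] {ι : Type*} [Fintype ι] [DecidableEq ι]
    (s : G →* ℤˣ) (M : G → Matrix ι ι ℂ) (ω : G → G → ℂ) extends IsCoRep s M ω : Prop where
  unitary : ∀ g, M g ∈ Matrix.unitaryGroup ι ℂ

def rho {G : Type*} [Group G] {ι : Type*} [Fintype ι] (s : G →* ℤˣ) (M : G → Matrix ι ι ℂ)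
    (g : G) (v : ι → ℂ) : ι → ℂ :=
  (M g).mulVec (vconj (s g) v)

def InvariantSub {G : Type*} [Group G] {ι : Type*} [Fintype ι] (s : G →* ℤˣ)
    (M : G → Matrix ι ι ℂ) (W : Submodule ℂ (ι → ℂ)) : Prop :=
  ∀ g : G, ∀ v ∈ W, rho s M g v ∈ W

section corep
variable {G : Type*} [Group G] [Fintype G] {ι : Type*} [Fintype ι] [DecidableEq ι]
  (s : G →* ℤˣ) (M : G → Matrix ι ι ℂ) (ω : G → G → ℂ)

lemma s_inv (g : G) : s g⁻¹ = s g := by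
  rw [map_inv]
  rcases Int.units_eq_one_or (s g) with h | h <;> rw [h] <;> rfl

lemma rho_add (g : G) (v w : ι → ℂ) :
    rho s M g (v + w) = rho s M g v + rho s M g w := by
  simp [rho, vconj_add, Matrix.mulVec_add]

lemma rho_smul (g : G) (c : ℂ) (v : ι → ℂ) :
    rho s M g (c • v) = cconj (s g) c • rho s M g v := by
  simp [rho, vconj_smul, Matrix.mulVec_smul]

lemma rho_sum {α : Type*} (g : G) (t : Finset α) (f : α → ι → ℂ) :
    rho s M g (∑ a ∈ t, f a) = ∑ a ∈ t, rho s M g (f a) := by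
  classical
  induction t using Finset.induction_on with
  | empty => simp [rho, vconj_zero]
  | insert _ _ h ih => rw [Finset.sum_insert h, Finset.sum_insert h, rho_add, ih]

variable (hM : IsUnitaryCoRep s M ω)
include hM

lemma M_one : M 1 = ω 1 1 • (1 : Matrix ι ι ℂ) := by
  have h := hM.mul_eq 1 1
  simp only [_root_.map_one, mul_one] at h
  rw [show mconj (1:ℤˣ) (M 1) = M 1 from if_pos rfl] at h
  have hu : (M 1)ᴴ * M 1 = 1 := by
    have := Matrix.mem_unitaryGroup_iff'.mp (hM.unitary 1)
    rwa [Matrix.star_eq_conjTranspose] at this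
  calc M 1 = ((M 1)ᴴ * M 1) * M 1 := by rw [hu, one_mul]
    _ = (M 1)ᴴ * (M 1 * M 1) := by rw [mul_assoc]
    _ = (M 1)ᴴ * (ω 1 1 • M 1) := by rw [h]
    _ = ω 1 1 • ((M 1)ᴴ * M 1) := by rw [Matrix.mul_smul]
    _ = ω 1 1 • 1 := by rw [hu]

lemma rho_rho_inv (g : G) (v : ι → ℂ) :
    rho s M g (rho s M g⁻¹ v) = (ω g g⁻¹ * ω 1 1) • v := by
  have key : rho s M g (rho s M g⁻¹ v)
      = (M g * mconj (s g) (M g⁻¹)) *ᵥ (vconj (s g) (vconj (s g⁻¹) v)) := by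
    simp only [rho, ← Matrix.mulVec_mulVec]
    congr 1
    rw [mconj_mulVec]
  rw [key, s_inv, vconj_vconj, hM.mul_eq, mul_inv_cancel, M_one s M ω hM]
  simp [Matrix.smul_mulVec, mul_smul]

lemma rho_surj_on (K : Submodule ℂ (ι → ℂ)) (hK : InvariantSub s M K)
    (g : G) (v : ι → ℂ) (hv : v ∈ K) : ∃ w ∈ K, rho s M g w = v := by
  set c : ℂ := ω g g⁻¹ * ω 1 1 with hc
  have hc0 : c ≠ 0 := by
    have h1 := hM.omega_norm g g⁻¹
    have h2 := hM.omega_norm 1 1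
    intro h
    rw [hc] at h
    rcases mul_eq_zero.mp h with h | h <;> simp [h] at h1 h2
  refine ⟨cconj (s g) c⁻¹ • rho s M g⁻¹ v, ?_, ?_⟩
  · exact K.smul_mem _ (hK g⁻¹ v hv)
  · rw [rho_smul]
    have : cconj (s g) (cconj (s g) c⁻¹) = c⁻¹ := by
      unfold cconj; split <;> simp
    rw [this, rho_rho_inv s M ω hM]
    rw [smul_smul, inv_mul_cancel₀ hc0, one_smul]

lemma rho_eq_on (K : Submodule ℂ (ι → ℂ)) (hK : InvariantSub s M K) : True := trivial

end corep
section euclid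
variable {G : Type*} [Group G] [Fintype G] {ι : Type*} [Fintype ι] [DecidableEq ι]
  (s : G →* ℤˣ) (M : G → Matrix ι ι ℂ) (ω : G → G → ℂ)

/-- inner product on `ι → ℂ` via the Euclidean space structure -/
def ip (u v : ι → ℂ) : ℂ := inner ℂ (WithLp.toLp 2 u : EuclideanSpace ℂ ι) (WithLp.toLp 2 v)

def Ksub (K : Submodule ℂ (EuclideanSpace ℂ ι)) : Submodule ℂ (ι → ℂ) :=
  K.comap (WithLp.linearEquiv 2 ℂ (ι → ℂ)).symm.toLinearMap

instance : Coe (Submodule ℂ (EuclideanSpace ℂ ι)) (Submodule ℂ (ι → ℂ)) := ⟨Ksub⟩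

lemma ip_eq (u v : ι → ℂ) : ip (ι := ι) u v = dotProduct (star u) v := by
  simp [ip, PiLp.inner_apply, dotProduct, mul_comm]

lemma ip_dot_conj (w : ℤˣ) (u v : ι → ℂ) :
    dotProduct (star (vconj w u)) (vconj w v)
      = cconj w (dotProduct (star u) v) := by
  unfold vconj cconj
  split
  · rfl
  · simp only [dotProduct, map_sum]
    refine Finset.sum_congr rfl fun x _ => ?_
    simp [mul_comm]

variable (hM : IsUnitaryCoRep s M ω)
include hM

lemma unitary_dot (g : G) (x y : ι → ℂ) :
    dotProduct (star (M g *ᵥ x)) (M g *ᵥ y) = dotProduct (star x) y := by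
  rw [Matrix.star_mulVec, Matrix.dotProduct_mulVec, Matrix.vecMul_vecMul]
  have : (M g)ᴴ * M g = 1 := by
    have := Matrix.mem_unitaryGroup_iff'.mp (hM.unitary g)
    rwa [Matrix.star_eq_conjTranspose] at this
  rw [this, Matrix.vecMul_one]

lemma rho_ip (g : G) (u v : ι → ℂ) :
    ip (ι := ι) (rho s M g u) (rho s M g v) = cconj (s g) (ip (ι := ι) u v) := by
  rw [ip_eq, ip_eq, rho, rho, unitary_dot s M ω hM, ip_dot_conj]

lemma inv_orthogonal (K : Submodule ℂ (EuclideanSpace ℂ ι)) (hK : InvariantSub s M K) :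
    InvariantSub s M (Kᗮ : Submodule ℂ (EuclideanSpace ℂ ι)) := by
  intro g w hw
  refine (Submodule.mem_orthogonal K (WithLp.toLp 2 (rho s M g w))).mpr ?_
  intro x hx
  obtain ⟨u, hu, huc⟩ := rho_surj_on s M ω hM K hK g (WithLp.ofLp x) hx
  have h := rho_ip s M ω hM g u w
  rw [huc] at h
  have h0 : ip (ι := ι) u w = 0 :=
    (K.mem_orthogonal (WithLp.toLp 2 w)).mp hw (WithLp.toLp 2 u) hu
  rw [h0] at h
  unfold ip at h
  rw [WithLp.toLp_ofLp] at h
  rw [h]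
  unfold cconj; split <;> simp

lemma exists_irred_decomp (N : ℕ) :
    ∀ K : Submodule ℂ (EuclideanSpace ℂ ι), Module.finrank ℂ K ≤ N → InvariantSub s M K →
    ∃ (k : ℕ) (W : Fin k → Submodule ℂ (EuclideanSpace ℂ ι)),
      (∀ i, InvariantSub s M (W i)) ∧
      (∀ i j, i ≠ j → W i ≤ (W j)ᗮ) ∧
      (⨆ i, W i) = K ∧
      (∀ i, ∀ V : Submodule ℂ (EuclideanSpace ℂ ι), V ≤ W i → InvariantSub s M V →
        V = ⊥ ∨ V = W i) := by
  induction N with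
  | zero =>
    intro K hr _
    have hKbot : K = ⊥ := Submodule.finrank_eq_zero.mp (Nat.le_zero.mp hr)
    exact ⟨0, fun i => i.elim0, fun i => i.elim0, fun i => i.elim0,
      by rw [hKbot]; exact iSup_of_empty _, fun i => i.elim0⟩
  | succ N ih =>
    intro K hr hK
    by_cases hKbot : K = ⊥
    · exact ⟨0, fun i => i.elim0, fun i => i.elim0, fun i => i.elim0,
        by rw [hKbot]; exact iSup_of_empty _, fun i => i.elim0⟩
    · classical
      have hex : ∃ m : ℕ, ∃ U : Submodule ℂ (EuclideanSpace ℂ ι),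
          U ≤ K ∧ U ≠ ⊥ ∧ InvariantSub s M U ∧ Module.finrank ℂ U = m :=
        ⟨Module.finrank ℂ K, K, le_rfl, hKbot, hK, rfl⟩
      obtain ⟨U, hUK, hUne, hUinv, hUrank⟩ := Nat.find_spec hex
      have hUmin : ∀ V : Submodule ℂ (EuclideanSpace ℂ ι), V ≤ U → InvariantSub s M V →
          V = ⊥ ∨ V = U := by
        intro V hVU hVinv
        by_cases hV : V = ⊥
        · exact Or.inl hV
        · right
          have h1 : ¬ (Module.finrank ℂ V < Nat.find hex) := by
            intro hlt
            exact Nat.find_min hex hlt ⟨V, hVU.trans hUK, hV, hVinv, rfl⟩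
          push_neg at h1
          exact Submodule.eq_of_le_of_finrank_le hVU (hUrank ▸ h1)
      have hKPinv : InvariantSub s M (Uᗮ ⊓ K : Submodule ℂ (EuclideanSpace ℂ ι)) := by
        intro g v hv
        exact ⟨inv_orthogonal s M ω hM U hUinv g v hv.1, hK g v hv.2⟩
      have hrank : Module.finrank ℂ U + Module.finrank ℂ (Uᗮ ⊓ K : Submodule ℂ _)
          = Module.finrank ℂ K := Submodule.finrank_add_inf_finrank_orthogonal hUK
      have hUpos : 0 < Module.finrank ℂ U :=
        Nat.pos_of_ne_zero (fun h => hUne (Submodule.finrank_eq_zero.mp h))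
      obtain ⟨k, W, h1, h2, h3, h4⟩ := ih (Uᗮ ⊓ K) (by omega) hKPinv
      have hWKP : ∀ j, W j ≤ Uᗮ ⊓ K := fun j => h3 ▸ le_iSup W j
      refine ⟨k + 1, Fin.cons U W, ?_, ?_, ?_, ?_⟩
      · intro i
        induction i using Fin.cases with
        | zero => simpa using hUinv
        | succ j => simpa using h1 j
      · intro i j hij
        induction i using Fin.cases with
        | zero =>
          induction j using Fin.cases with
          | zero => exact absurd rfl hij
          | succ j' =>
            simp only [Fin.cons_zero, Fin.cons_succ]
            exact Submodule.IsOrtho.symm ((hWKP j').trans inf_le_left)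
        | succ i' =>
          induction j using Fin.cases with
          | zero =>
            simp only [Fin.cons_zero, Fin.cons_succ]
            exact (hWKP i').trans inf_le_left
          | succ j' =>
            simp only [Fin.cons_succ]
            exact h2 i' j' (fun h => hij (by rw [h]))
      · apply le_antisymm
        · apply iSup_le
          intro i
          induction i using Fin.cases with
          | zero => simpa using hUK
          | succ j => simpa using (hWKP j).trans inf_le_right
        · rw [← Submodule.sup_orthogonal_inf_of_hasOrthogonalProjection hUK]
          apply sup_le
          · exact le_iSup_of_le 0 (by simp)
          · rw [← h3]
            apply iSup_le
            intro j
            exact le_iSup_of_le j.succ (by simp)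
      · intro i
        induction i using Fin.cases with
        | zero => simpa using hUmin
        | succ j => simpa using h4 j

end euclid
def eigSpace {ι : Type*} [Fintype ι] (Q : Matrix ι ι ℂ) (lam : ℂ) :
    Submodule ℂ (ι → ℂ) where
  carrier := {v | Q.mulVec v = lam • v}
  add_mem' := by
    intro a b ha hb
    simp only [Set.mem_setOf_eq] at *
    simp [Matrix.mulVec_add, ha, hb, smul_add]
  zero_mem' := by simp [Matrix.mulVec_zero]
  smul_mem' := by
    intro c v hv
    simp only [Set.mem_setOf_eq] at *
    rw [Matrix.mulVec_smul, hv, smul_comm]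

lemma mem_eigSpace_iff {ι : Type*} [Fintype ι] (Q : Matrix ι ι ℂ) (lam : ℂ) (v : ι → ℂ) :
    v ∈ eigSpace Q lam ↔ Q.mulVec v = lam • v := Iff.rfl

lemma cconj_real_nat (u : ℤˣ) (m : ℕ) : cconj u ((m : ℂ) + 1) = (m : ℂ) + 1 := by
  unfold cconj; split <;> simp

section proj
variable {G : Type*} [Group G] [Fintype G] {ι : Type*} [Fintype ι] [DecidableEq ι]
  (s : G →* ℤˣ) (M : G → Matrix ι ι ℂ) (ω : G → G → ℂ)

/-- orthogonal projection onto `K`, as an endomorphism of `ι → ℂ` -/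
def pl (K : Submodule ℂ (EuclideanSpace ℂ ι)) : (ι → ℂ) →ₗ[ℂ] (ι → ℂ) :=
  (WithLp.linearEquiv 2 ℂ (ι → ℂ)).toLinearMap ∘ₗ K.starProjection.toLinearMap ∘ₗ
    (WithLp.linearEquiv 2 ℂ (ι → ℂ)).symm.toLinearMap

lemma pl_mem (K : Submodule ℂ (EuclideanSpace ℂ ι)) (v : ι → ℂ) :
    pl K v ∈ (K : Submodule ℂ (ι → ℂ)) :=
  K.starProjection_apply_mem (WithLp.toLp 2 v)

lemma pl_self (K : Submodule ℂ (EuclideanSpace ℂ ι)) {v : ι → ℂ}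
    (h : v ∈ (K : Submodule ℂ (ι → ℂ))) : pl K v = v :=
  congrArg WithLp.ofLp (K.starProjection_eq_self_iff.mpr h)

lemma pl_ortho (K : Submodule ℂ (EuclideanSpace ℂ ι)) {v : ι → ℂ}
    (h : v ∈ ((Kᗮ : Submodule ℂ (EuclideanSpace ℂ ι)) : Submodule ℂ (ι → ℂ))) :
    pl K v = 0 := by
  have h' := congrArg WithLp.ofLp (K.starProjection_apply_eq_zero_iff.mpr h)
  exact h'

lemma pl_sub_mem (K : Submodule ℂ (EuclideanSpace ℂ ι)) (v : ι → ℂ) :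
    v - pl K v ∈ ((Kᗮ : Submodule ℂ (EuclideanSpace ℂ ι)) : Submodule ℂ (ι → ℂ)) :=
  K.sub_starProjection_mem_orthogonal (WithLp.toLp 2 v)

lemma pl_ip (K : Submodule ℂ (EuclideanSpace ℂ ι)) (u v : ι → ℂ) :
    ip (ι := ι) (pl K u) v = ip (ι := ι) u (pl K v) :=
  K.inner_starProjection_left_eq_right (WithLp.toLp 2 u) (WithLp.toLp 2 v)

variable (k : ℕ) (W : Fin k → Submodule ℂ (EuclideanSpace ℂ ι))

def Qop : (ι → ℂ) →ₗ[ℂ] (ι → ℂ) := ∑ i : Fin k, (((i : ℕ) : ℂ) + 1) • pl (W i)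

def Qmat : Matrix ι ι ℂ := LinearMap.toMatrix' (Qop k W)

lemma Qmat_mulVec (v : ι → ℂ) : Qmat k W *ᵥ v = Qop k W v := by
  rw [Qmat, ← Matrix.toLin'_apply, Matrix.toLin'_toMatrix']

lemma Qop_apply (v : ι → ℂ) :
    Qop k W v = ∑ i : Fin k, (((i : ℕ) : ℂ) + 1) • pl (W i) v := by
  simp [Qop, LinearMap.sum_apply, LinearMap.smul_apply]

variable (horth : ∀ i j, i ≠ j → W i ≤ (W j)ᗮ)
include horth

lemma pl_pl_ne {i j : Fin k} (hij : i ≠ j) (v : ι → ℂ) :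
    pl (W j) (pl (W i) v) = 0 :=
  pl_ortho (W j) (horth i j hij (pl_mem (W i) v))

lemma Qop_mem_eig (m : Fin k) {v : ι → ℂ} (hv : v ∈ (W m : Submodule ℂ (ι → ℂ))) :
    Qop k W v = (((m : ℕ) : ℂ) + 1) • v := by
  rw [Qop_apply]
  rw [Finset.sum_eq_single m]
  · rw [pl_self (W m) hv]
  · intro i _ him
    rw [pl_ortho (W i) (horth m i (fun h => him h.symm) hv), smul_zero]
  · intro h; exact absurd (Finset.mem_univ m) h

lemma pl_Qop (m : Fin k) (v : ι → ℂ) :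
    pl (W m) (Qop k W v) = (((m : ℕ) : ℂ) + 1) • pl (W m) v := by
  rw [Qop_apply, map_sum]
  rw [Finset.sum_eq_single m]
  · rw [_root_.map_smul, pl_self (W m) (pl_mem (W m) v)]
  · intro i _ him
    rw [_root_.map_smul, pl_pl_ne k W horth him, smul_zero]
  · intro h; exact absurd (Finset.mem_univ m) h

variable (hsup : (⨆ i, W i) = ⊤)
include hsup

lemma sum_pl (v : ι → ℂ) : ∑ i : Fin k, pl (W i) v = v := by
  have hv : WithLp.toLp 2 v ∈ (⨆ i, W i : Submodule ℂ (EuclideanSpace ℂ ι)) := by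
    rw [hsup]; trivial
  refine Submodule.iSup_induction
    (motive := fun x => ∑ i : Fin k, pl (W i) (WithLp.ofLp x) = WithLp.ofLp x) W hv
    ?_ ?_ ?_
  · intro j x hx
    rw [Finset.sum_eq_single j]
    · exact pl_self (W j) hx
    · intro i _ hij
      exact pl_ortho (W i) (horth j i (fun h => hij h.symm) hx)
    · intro h; exact absurd (Finset.mem_univ j) h
  · simp
  · intro x y hx hy
    simp only [WithLp.ofLp_add, map_add, Finset.sum_add_distrib, hx, hy]

lemma eig_eq_W (m : Fin k) : (W m : Submodule ℂ (ι → ℂ)) = eigSpace (Qmat k W) (((m : ℕ) : ℂ) + 1) := by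
  ext v
  rw [mem_eigSpace_iff, Qmat_mulVec]
  constructor
  · intro hv
    exact Qop_mem_eig k W horth m hv
  · intro hv
    have hplz : ∀ i : Fin k, i ≠ m → pl (W i) v = 0 := by
      intro i him
      have h1 : pl (W i) (Qop k W v) = (((i : ℕ) : ℂ) + 1) • pl (W i) v :=
        pl_Qop k W horth i v
      rw [hv, _root_.map_smul] at h1
      have h2 : ((((m : ℕ) : ℂ) + 1) - (((i : ℕ) : ℂ) + 1)) • pl (W i) v = 0 := by
        rw [sub_smul, h1, sub_self]
      rcases smul_eq_zero.mp h2 with h | h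
      · exfalso
        apply him
        have : ((i : ℕ) : ℂ) = ((m : ℕ) : ℂ) := by linear_combination -h
        exact Fin.ext (Nat.cast_injective this)
      · exact h
    have hv2 := sum_pl k W horth hsup v
    rw [Finset.sum_eq_single m] at hv2
    · rw [← hv2]; exact pl_mem (W m) v
    · intro i _ him; exact hplz i him
    · intro h; exact absurd (Finset.mem_univ m) h

lemma eig_eq_bot (lam : ℂ) (hlam : ∀ m : Fin k, lam ≠ ((m : ℕ) : ℂ) + 1) :
    eigSpace (Qmat k W) lam = ⊥ := by
  ext v
  rw [mem_eigSpace_iff, Qmat_mulVec, Submodule.mem_bot]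
  constructor
  · intro hv
    have hplz : ∀ i : Fin k, pl (W i) v = 0 := by
      intro i
      have h1 := pl_Qop k W horth i v
      rw [hv, _root_.map_smul] at h1
      have h2 : ((lam - ((((i : ℕ) : ℂ)) + 1))) • pl (W i) v = 0 := by
        rw [sub_smul, h1, sub_self]
      rcases smul_eq_zero.mp h2 with h | h
      · exact absurd (by linear_combination h) (hlam i)
      · exact h
    have hv2 := sum_pl k W horth hsup v
    simp only [hplz, Finset.sum_const_zero] at hv2
    exact hv2.symm
  · intro h; rw [h]; simp

end proj
section herm
variable {G : Type*} [Group G] [Fintype G] {ι : Type*} [Fintype ι] [DecidableEq ι]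
  (s : G →* ℤˣ) (M : G → Matrix ι ι ℂ) (ω : G → G → ℂ)
  (k : ℕ) (W : Fin k → Submodule ℂ (EuclideanSpace ℂ ι))

lemma Qop_selfadj (x y : ι → ℂ) :
    ip (ι := ι) (Qop k W x) y = ip (ι := ι) x (Qop k W y) := by
  rw [Qop_apply, Qop_apply]
  unfold ip
  rw [WithLp.toLp_sum, WithLp.toLp_sum, sum_inner, inner_sum]
  refine Finset.sum_congr rfl fun i _ => ?_
  rw [WithLp.toLp_smul, WithLp.toLp_smul, inner_smul_left, inner_smul_right]
  congr 1
  · simp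
  · exact pl_ip (W i) x y

lemma ip_single (i : ι) (u : ι → ℂ) : ip (ι := ι) (Pi.single i 1) u = u i := by
  rw [ip_eq]
  simp [dotProduct, Pi.single_apply, apply_ite]

lemma Qmat_entry (i j : ι) :
    Qmat k W i j = ip (ι := ι) (Pi.single i 1) (Qop k W (Pi.single j 1)) := by
  rw [ip_single, Qmat, LinearMap.toMatrix'_apply]

lemma Qmat_herm : (Qmat k W)ᴴ = Qmat k W := by
  ext i j
  rw [Matrix.conjTranspose_apply, Qmat_entry k W i j, Qmat_entry k W j i]
  have h1 : (starRingEnd ℂ) (ip (ι := ι) (Pi.single j 1) (Qop k W (Pi.single i 1)))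
      = ip (ι := ι) (Qop k W (Pi.single i 1)) (Pi.single j 1) := by
    unfold ip
    exact inner_conj_symm _ _
  show (starRingEnd ℂ) (ip (ι := ι) (Pi.single j 1) (Qop k W (Pi.single i 1))) = _
  rw [h1, Qop_selfadj]

variable (hM : IsUnitaryCoRep s M ω) (hinv : ∀ i, InvariantSub s M (W i))
include hM hinv

lemma pl_rho (g : G) (v : ι → ℂ) (i : Fin k) :
    pl (W i) (rho s M g v) = rho s M g (pl (W i) v) := by
  have hsplit : pl (W i) v + (v - pl (W i) v) = v := by abel
  have hdec : rho s M g v = rho s M g (pl (W i) v) + rho s M g (v - pl (W i) v) := by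
    conv_lhs => rw [← hsplit]
    rw [rho_add]
  rw [hdec, map_add, pl_self (W i) (hinv i g _ (pl_mem (W i) v)),
    pl_ortho (W i) (inv_orthogonal s M ω hM (W i) (hinv i) g _ (pl_sub_mem (W i) v)), add_zero]

lemma Qop_rho (g : G) (v : ι → ℂ) :
    Qop k W (rho s M g v) = rho s M g (Qop k W v) := by
  rw [Qop_apply, Qop_apply, rho_sum]
  refine Finset.sum_congr rfl fun i _ => ?_
  rw [pl_rho s M ω k W hM hinv g v i, rho_smul, cconj_real_nat]

omit hM hinv in
lemma mat_ext_mulVec {A B : Matrix ι ι ℂ} (h : ∀ v, A *ᵥ v = B *ᵥ v) : A = B := by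
  apply Matrix.toLin'.injective
  exact LinearMap.ext fun v => by simpa [Matrix.toLin'_apply] using h v

lemma Qmat_comm (g : G) :
    M g * mconj (s g) (Qmat k W) = Qmat k W * M g := by
  apply mat_ext_mulVec
  intro v
  calc (M g * mconj (s g) (Qmat k W)) *ᵥ v
      = M g *ᵥ (mconj (s g) (Qmat k W) *ᵥ vconj (s g) (vconj (s g) v)) := by
        rw [vconj_vconj, Matrix.mulVec_mulVec]
    _ = M g *ᵥ vconj (s g) (Qmat k W *ᵥ vconj (s g) v) := by rw [mconj_mulVec]
    _ = rho s M g (Qop k W (vconj (s g) v)) := by rw [Qmat_mulVec]; rfl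
    _ = Qop k W (rho s M g (vconj (s g) v)) :=
        (Qop_rho s M ω k W hM hinv g (vconj (s g) v)).symm
    _ = Qmat k W *ᵥ (M g *ᵥ v) := by
        rw [← Qmat_mulVec]
        unfold rho
        rw [vconj_vconj]
    _ = (Qmat k W * M g) *ᵥ v := Matrix.mulVec_mulVec v (Qmat k W) (M g)

end herm
lemma mconj_add {ι : Type*} (u : ℤˣ) (X Y : Matrix ι ι ℂ) :
    mconj u (X + Y) = mconj u X + mconj u Y := by
  unfold mconj; split
  · rfl
  · ext i j; simp

lemma cconj_of_conj_eq {u : ℤˣ} {c : ℂ} (h : (starRingEnd ℂ) c = c) : cconj u c = c := by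
  unfold cconj; split
  · rfl
  · exact h

section hermgen
variable {ι : Type*} [Fintype ι] [DecidableEq ι]

lemma herm_eig_real {Q : Matrix ι ι ℂ} (hQ : Qᴴ = Q) {lam : ℂ} {v : ι → ℂ}
    (hv : Q *ᵥ v = lam • v) (hv0 : v ≠ 0) : (starRingEnd ℂ) lam = lam := by
  have h1 : dotProduct (star v) (Q *ᵥ v) = lam * dotProduct (star v) v := by
    rw [hv, dotProduct_smul, smul_eq_mul]
  have h2 : dotProduct (star v) (Q *ᵥ v)
      = (starRingEnd ℂ) lam * dotProduct (star v) v := by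
    rw [Matrix.dotProduct_mulVec]
    have h3 : star v ᵥ* Q = (starRingEnd ℂ) lam • star v := by
      rw [← hQ, ← Matrix.star_mulVec, hv, star_smul]
      rfl
    rw [h3, smul_dotProduct, smul_eq_mul]
  have hd : dotProduct (star v) v ≠ 0 := by
    intro h
    rw [← ip_eq] at h
    unfold ip at h
    exact hv0 (congrArg WithLp.ofLp ((inner_self_eq_zero (𝕜 := ℂ) (E := EuclideanSpace ℂ ι)).mp h))
  exact mul_right_cancel₀ hd (h2.symm.trans h1)

lemma herm_eig_orth {Q : Matrix ι ι ℂ} (hQ : Qᴴ = Q) {lam mu : ℂ} {v w : ι → ℂ}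
    (hne : lam ≠ mu) (hv : Q *ᵥ v = lam • v) (hw : Q *ᵥ w = mu • w) :
    dotProduct (star v) w = 0 := by
  by_cases hv0 : v = 0
  · simp [hv0]
  have hreal := herm_eig_real hQ hv hv0
  have h1 : dotProduct (star v) (Q *ᵥ w) = mu * dotProduct (star v) w := by
    rw [hw, dotProduct_smul, smul_eq_mul]
  have h2 : dotProduct (star v) (Q *ᵥ w) = lam * dotProduct (star v) w := by
    rw [Matrix.dotProduct_mulVec]
    have h3 : star v ᵥ* Q = lam • star v := by
      rw [← hQ, ← Matrix.star_mulVec, hv, star_smul]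
      show (starRingEnd ℂ) lam • star v = lam • star v
      rw [hreal]
    rw [h3, smul_dotProduct, smul_eq_mul]
  have h4 : (lam - mu) * dotProduct (star v) w = 0 := by
    rw [sub_mul, h2.symm.trans h1]
    ring
  rcases mul_eq_zero.mp h4 with h | h
  · exact absurd (sub_eq_zero.mp h) hne
  · exact h

end hermgen

section avg
variable {G : Type*} [Group G] [Fintype G] {ι : Type*} [Fintype ι] [DecidableEq ι]
  (s : G →* ℤˣ) (M : G → Matrix ι ι ℂ) (ω : G → G → ℂ)

lemma eig_inv {Q : Matrix ι ι ℂ} (hcomm : ∀ g, M g * mconj (s g) Q = Q * M g)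
    (hherm : Qᴴ = Q) (lam : ℂ) (g : G) (v : ι → ℂ) (hv : Q *ᵥ v = lam • v) :
    Q *ᵥ rho s M g v = lam • rho s M g v := by
  by_cases hv0 : v = 0
  · subst hv0
    simp [rho, vconj_zero, Matrix.mulVec_zero]
  · have hreal : (starRingEnd ℂ) lam = lam := herm_eig_real hherm hv hv0
    calc Q *ᵥ rho s M g v = (Q * M g) *ᵥ vconj (s g) v := by
          rw [rho, Matrix.mulVec_mulVec]
      _ = (M g * mconj (s g) Q) *ᵥ vconj (s g) v := by rw [hcomm g]
      _ = M g *ᵥ (mconj (s g) Q *ᵥ vconj (s g) v) := by rw [Matrix.mulVec_mulVec]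
      _ = M g *ᵥ vconj (s g) (Q *ᵥ v) := by rw [mconj_mulVec]
      _ = M g *ᵥ (cconj (s g) lam • vconj (s g) v) := by rw [hv, vconj_smul]
      _ = lam • rho s M g v := by
          rw [cconj_of_conj_eq hreal, Matrix.mulVec_smul]
          rfl

variable (hM : IsUnitaryCoRep s M ω)
include hM

lemma omega_conj_mul (g h : G) : ω g h * star (ω g h) = 1 := by
  rw [show star (ω g h) = (starRingEnd ℂ) (ω g h) from rfl, Complex.mul_conj,
    ← Complex.sq_norm, hM.omega_norm g h]
  norm_num

lemma mconj_M (g h : G) : mconj (s g) (M h) = ω g h • ((M g)ᴴ * M (g * h)) := by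
  have hu : (M g)ᴴ * M g = 1 := by
    have := Matrix.mem_unitaryGroup_iff'.mp (hM.unitary g)
    rwa [Matrix.star_eq_conjTranspose] at this
  calc mconj (s g) (M h) = ((M g)ᴴ * M g) * mconj (s g) (M h) := by rw [hu, one_mul]
    _ = (M g)ᴴ * (M g * mconj (s g) (M h)) := by rw [mul_assoc]
    _ = (M g)ᴴ * (ω g h • M (g * h)) := by rw [hM.mul_eq]
    _ = ω g h • ((M g)ᴴ * M (g * h)) := by rw [Matrix.mul_smul]

lemma avg_term (X : Matrix ι ι ℂ) (g h : G) :
    M g * mconj (s g) (M h * mconj (s h) X * (M h)ᴴ)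
      = M (g * h) * mconj (s (g * h)) X * (M (g * h))ᴴ * M g := by
  have hu : M g * (M g)ᴴ = 1 := by
    have := Matrix.mem_unitaryGroup_iff.mp (hM.unitary g)
    rwa [Matrix.star_eq_conjTranspose] at this
  rw [mconj_mul, mconj_mul, mconj_mconj, ← map_mul s g h, mconj_conjTranspose]
  rw [← mul_assoc, ← mul_assoc, hM.mul_eq g h, mconj_M s M ω hM g h]
  rw [Matrix.conjTranspose_smul, Matrix.conjTranspose_mul, Matrix.conjTranspose_conjTranspose]
  rw [Matrix.smul_mul, Matrix.smul_mul, Matrix.mul_smul, smul_smul]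
  rw [omega_conj_mul s M ω hM g h, one_smul]
  rw [← mul_assoc]

end avg
section main
variable {G : Type*} [Group G] [Fintype G] {ι : Type*} [Fintype ι] [DecidableEq ι]
  (s : G →* ℤˣ) (M : G → Matrix ι ι ℂ) (ω : G → G → ℂ)
  (hM : IsUnitaryCoRep s M ω)
include hM

lemma avg_comm (X : Matrix ι ι ℂ) (g : G) :
    M g * mconj (s g) (∑ h : G, M h * mconj (s h) X * (M h)ᴴ)
      = (∑ h : G, M h * mconj (s h) X * (M h)ᴴ) * M g := by
  rw [mconj_sum, Finset.mul_sum, Finset.sum_mul]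
  rw [Finset.sum_congr rfl (fun h _ => avg_term s M ω hM X g h)]
  exact Fintype.sum_bijective (fun h => g * h) (Group.mulLeft_bijective g) _ _ (fun h => rfl)

lemma qr_conjTranspose (Q0 : Matrix ι ι ℂ) :
    (∑ h : G, M h * mconj (s h) Q0 * (M h)ᴴ)ᴴ = ∑ h : G, M h * mconj (s h) Q0ᴴ * (M h)ᴴ := by
  rw [Matrix.conjTranspose_sum]
  refine Finset.sum_congr rfl fun h _ => ?_
  rw [Matrix.conjTranspose_mul, Matrix.conjTranspose_mul, Matrix.conjTranspose_conjTranspose,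
    mconj_conjTranspose]
  rw [mul_assoc]

lemma part1 (Q0 qr Qr : Matrix ι ι ℂ)
    (hqr : qr = ∑ g : G, M g * mconj (s g) Q0 * (M g)ᴴ)
    (hQr : Qr = qr + qrᴴ) :
    Qr.IsHermitian ∧
    (∀ g, M g * mconj (s g) Qr = Qr * M g) ∧
    (∀ (lam : ℂ) (g : G) (v : ι → ℂ), Qr.mulVec v = lam • v →
      Qr.mulVec (rho s M g v) = lam • rho s M g v) := by
  have hherm : Qrᴴ = Qr := by
    rw [hQr, Matrix.conjTranspose_add, Matrix.conjTranspose_conjTranspose, add_comm]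
  have hcomm : ∀ g, M g * mconj (s g) Qr = Qr * M g := by
    intro g
    rw [hQr, mconj_add, Matrix.mul_add, Matrix.add_mul]
    congr 1
    · rw [hqr]
      exact avg_comm s M ω hM Q0 g
    · rw [hqr, qr_conjTranspose s M ω hM Q0]
      exact avg_comm s M ω hM Q0ᴴ g
  exact ⟨hherm, hcomm, fun lam g v hv => eig_inv s M hcomm hherm lam g v hv⟩

end main
/-- for any `Q₀`, the matrix `Q_r = q_r + q_r†` with
`q_r = Σ_g M(g)·Q₀^{σ(g)}·M(g)†` is Hermitian, commutes with all the operators `ρ(g)`,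
and its eigenspaces are invariant; moreover some choice of `Q₀` yields an orthogonal
decomposition of `ℂⁿ` into irreducible invariant subspaces. -/
theorem averaged_commutant_and_decomposition {G : Type*} [Group G] [Fintype G]
    (s : G →* ℤˣ) (hs : Function.Surjective s)
    {n : ℕ}
    (M : G → Matrix (Fin n) (Fin n) ℂ) (ω : G → G → ℂ)
    (hM : IsUnitaryCoRep s M ω) :
    (∀ Q0 qr Qr : Matrix (Fin n) (Fin n) ℂ,
      qr = ∑ g : G, M g * mconj (s g) Q0 * (M g)ᴴ →
      Qr = qr + qrᴴ →
      Qr.IsHermitian ∧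
      (∀ g, M g * mconj (s g) Qr = Qr * M g) ∧
      (∀ (lam : ℂ) (g : G) (v : Fin n → ℂ), Qr.mulVec v = lam • v →
        Qr.mulVec (rho s M g v) = lam • rho s M g v)) ∧
    (∃ Q0 : Matrix (Fin n) (Fin n) ℂ, ∀ qr Qr : Matrix (Fin n) (Fin n) ℂ,
      qr = ∑ g : G, M g * mconj (s g) Q0 * (M g)ᴴ →
      Qr = qr + qrᴴ →
      (∀ lam mu : ℂ, lam ≠ mu → ∀ v ∈ eigSpace Qr lam, ∀ w ∈ eigSpace Qr mu,
        dotProduct (star v) w = 0) ∧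
      (⨆ lam : ℂ, eigSpace Qr lam) = ⊤ ∧
      (∀ lam : ℂ, InvariantSub s M (eigSpace Qr lam)) ∧
      (∀ lam : ℂ, ∀ W : Submodule ℂ (Fin n → ℂ), W ≤ eigSpace Qr lam →
        InvariantSub s M W → W = ⊥ ∨ W = eigSpace Qr lam)) := by
  constructor
  · intro Q0 qr Qr hqr hQr
    exact part1 s M ω hM Q0 qr Qr hqr hQr
  · -- part 2
    obtain ⟨k, W, hinv, horth, hsup, hirr⟩ :=
      exists_irred_decomp s M ω hM
        (Module.finrank ℂ (⊤ : Submodule ℂ (EuclideanSpace ℂ (Fin n))))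
        ⊤ le_rfl (fun _ _ _ => trivial)
    have hherm := Qmat_herm k W
    have hcomm : ∀ g, M g * mconj (s g) (Qmat k W) = Qmat k W * M g :=
      fun g => Qmat_comm s M ω k W hM hinv g
    have hu : ∀ g : G, M g * (M g)ᴴ = 1 := by
      intro g
      have := Matrix.mem_unitaryGroup_iff.mp (hM.unitary g)
      rwa [Matrix.star_eq_conjTranspose] at this
    set c : ℂ := ((2 * Fintype.card G : ℕ) : ℂ)⁻¹ with hc
    have hcardne : ((2 * Fintype.card G : ℕ) : ℂ) ≠ 0 := by
      have h := Fintype.card_pos (α := G)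
      exact Nat.cast_ne_zero.mpr (by omega)
    refine ⟨c • Qmat k W, ?_⟩
    intro qr Qr hqr hQr
    -- first show Qr = Qmat k W
    have hterm : ∀ g : G, M g * mconj (s g) (c • Qmat k W) * (M g)ᴴ = c • Qmat k W := by
      intro g
      have hcc : cconj (s g) c = c := by
        apply cconj_of_conj_eq
        rw [hc, map_inv₀, map_natCast]
      rw [mconj_smul, hcc, Matrix.mul_smul, Matrix.smul_mul, hcomm g]
      rw [mul_assoc, hu g, mul_one]
    have hqr2 : qr = ((Fintype.card G : ℂ) * c) • Qmat k W := by
      rw [hqr, Finset.sum_congr rfl (fun g _ => hterm g), Finset.sum_const, Finset.card_univ,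
        ← Nat.cast_smul_eq_nsmul ℂ, smul_smul]
    have hQrQ : Qr = Qmat k W := by
      have hd : (starRingEnd ℂ) ((Fintype.card G : ℂ) * c) = (Fintype.card G : ℂ) * c := by
        rw [hc, _root_.map_mul, map_natCast, map_inv₀, map_natCast]
      rw [hQr, hqr2, Matrix.conjTranspose_smul, hherm]
      rw [show star ((Fintype.card G : ℂ) * c) = (starRingEnd ℂ) ((Fintype.card G : ℂ) * c)
        from rfl, hd, ← add_smul]
      have h2 : (Fintype.card G : ℂ) * c + (Fintype.card G : ℂ) * c = 1 := by
        rw [hc]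
        field_simp
        push_cast
        ring
      rw [h2, one_smul]
    rw [hQrQ]
    refine ⟨?_, ?_, ?_, ?_⟩
    · intro lam mu hne v hv w hw
      exact herm_eig_orth hherm hne hv hw
    · apply le_antisymm le_top
      intro v _
      have hv := sum_pl k W horth hsup v
      rw [← hv]
      apply Submodule.sum_mem
      intro i _
      exact Submodule.mem_iSup_of_mem (((i : ℕ) : ℂ) + 1)
        ((le_of_eq (eig_eq_W k W horth hsup i)) (pl_mem (W i) v))
    · intro lam g v hv
      exact eig_inv s M hcomm hherm lam g v hv
    · intro lam V hVle hVinv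
      by_cases hex : ∃ m : Fin k, lam = ((m : ℕ) : ℂ) + 1
      · obtain ⟨m, rfl⟩ := hex
        rw [← eig_eq_W k W horth hsup m] at hVle ⊢
        have hVV : V = Ksub (V.comap (WithLp.linearEquiv 2 ℂ (Fin n → ℂ)).toLinearMap) := by
          ext x; exact Iff.rfl
        rcases hirr m (V.comap (WithLp.linearEquiv 2 ℂ (Fin n → ℂ)).toLinearMap)
          (fun x hx => hVle hx) hVinv with h | h
        · left; rw [hVV, h]; ext x; simp [Ksub]
        · right; rw [hVV, h]
      · push_neg at hex
        left
        have hbot := eig_eq_bot k W horth hsup lam hex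
        rw [hbot] at hVle
        exact le_bot_iff.mp hVle

end
end

section
/- Let M be a unitary projective co-representation of G of dimension n with factor system ω satisfying ω(e,e) = 1, and suppose the fixed anti-unitary element T0 satisfies T0² = e and ω(T0, T0) = −1. Then the conjugate-linear operator ρ(T0) : v ↦ M(T0)·conj(v) satisfies ρ(T0)² = −id. Consequently, for every Hermitian n×n matrix 𝐻 satisfying 𝐻·M(T0) = M(T0)·conj(𝐻) (i.e., 𝐻 commutes with ρ(T0)), every eigenvalue of 𝐻 has even multiplicity; in particular n is even (Kramers-type degeneracy enforced by an anti-unitary symmetry squaring to −1). -/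
open Matrix Complex BigOperators

noncomputable section

lemma mem_eigSpace {ι : Type*} [Fintype ι] {Q : Matrix ι ι ℂ} {lam : ℂ} {v : ι → ℂ} :
    v ∈ eigSpace Q lam ↔ Q.mulVec v = lam • v := Iff.rfl

namespace KramersAux

variable {n : ℕ}

lemma sum_dotProduct' {α : Type*} [Fintype α] (f : α → Fin n → ℂ) (w : Fin n → ℂ) :
    (∑ i, f i) ⬝ᵥ w = ∑ i, f i ⬝ᵥ w := by
  simp only [dotProduct, Finset.sum_apply, Finset.sum_mul]
  exact Finset.sum_comm

lemma dotProduct_sum' {α : Type*} [Fintype α] (w : Fin n → ℂ) (f : α → Fin n → ℂ) :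
    w ⬝ᵥ (∑ i, f i) = ∑ i, w ⬝ᵥ f i := by
  simp only [dotProduct, Finset.sum_apply, Finset.mul_sum]
  exact Finset.sum_comm

lemma mulVec_sum' {α : Type*} [Fintype α] (A : Matrix (Fin n) (Fin n) ℂ)
    (f : α → Fin n → ℂ) : A.mulVec (∑ i, f i) = ∑ i, A.mulVec (f i) := by
  funext j
  simp only [Matrix.mulVec, Finset.sum_apply]
  exact dotProduct_sum' _ _

lemma star_self_dot_zero (v : Fin n → ℂ) (h : star v ⬝ᵥ v = 0) : v = 0 := by
  have h2 : (↑(∑ i, Complex.normSq (v i)) : ℂ) = 0 := by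
    rw [← h]
    simp only [dotProduct, Pi.star_apply]
    push_cast
    refine Finset.sum_congr rfl fun i _ => ?_
    rw [Complex.normSq_eq_conj_mul_self]; rfl
  have h3 : (∑ i, Complex.normSq (v i)) = 0 := by exact_mod_cast h2
  funext i
  have := (Finset.sum_eq_zero_iff_of_nonneg
    (fun i _ => Complex.normSq_nonneg (v i))).mp h3 i (Finset.mem_univ i)
  exact Complex.normSq_eq_zero.mp this

lemma star_mulVec_conj (A : Matrix (Fin n) (Fin n) ℂ) (x : Fin n → ℂ) :
    star (A.mulVec x) = (A.map (starRingEnd ℂ)).mulVec (star x) := by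
  funext i
  simp [Matrix.mulVec, dotProduct, map_sum]

lemma inner_mulVec (A : Matrix (Fin n) (Fin n) ℂ) (hA : A ∈ Matrix.unitaryGroup (Fin n) ℂ)
    (x y : Fin n → ℂ) : star (A.mulVec x) ⬝ᵥ A.mulVec y = star x ⬝ᵥ y := by
  have h1 : Aᴴ * A = 1 := by
    have := Matrix.mem_unitaryGroup_iff'.mp hA
    rwa [Matrix.star_eq_conjTranspose] at this
  rw [Matrix.star_mulVec, Matrix.dotProduct_mulVec, Matrix.vecMul_vecMul, h1,
    Matrix.vecMul_one]

lemma even_finrank_of_quaternionic (A : Matrix (Fin n) (Fin n) ℂ)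
    (hA : A ∈ Matrix.unitaryGroup (Fin n) ℂ)
    (hA2 : ∀ v : Fin n → ℂ, A.mulVec (star (A.mulVec (star v))) = -v)
    (V : Submodule ℂ (Fin n → ℂ))
    (hV : ∀ v ∈ V, A.mulVec (star v) ∈ V) :
    Even (Module.finrank ℂ V) := by
  classical
  set d := Module.finrank ℂ V with hd
  let b : Module.Basis (Fin d) ℂ V := Module.finBasis ℂ V
  set J : (Fin n → ℂ) → (Fin n → ℂ) := fun v => A.mulVec (star v) with hJdef
  have hJJ : ∀ v, J (J v) = -v := hA2
  have hinner : ∀ x y : Fin n → ℂ, star (J x) ⬝ᵥ J y = star y ⬝ᵥ x := by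
    intro x y
    have h := inner_mulVec A hA (star x) (star y)
    simp only [hJdef]
    rw [h, star_star, dotProduct_comm]
  have hJneg : ∀ v, J (-v) = -J v := by
    intro v; simp [hJdef, Matrix.mulVec_neg]
  have hJsum : ∀ (r : Fin d → ℂ) (u : Fin d → (Fin n → ℂ)),
      J (∑ i, r i • u i) = ∑ i, (starRingEnd ℂ) (r i) • J (u i) := by
    intro r u
    simp only [hJdef]
    rw [star_sum]
    simp only [star_smul, starRingEnd_apply]
    rw [mulVec_sum']
    congr 1; funext i
    rw [Matrix.mulVec_smul]
  set P : Matrix (Fin d) (Fin d) ℂ :=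
    Matrix.of fun i j => star (J ((b i : Fin n → ℂ))) ⬝ᵥ ((b j : Fin n → ℂ)) with hP
  have hPij : ∀ i j, P i j = star (J ((b i : Fin n → ℂ))) ⬝ᵥ ((b j : Fin n → ℂ)) := by
    intro i j; rfl
  have hskew : ∀ i j, P j i = -P i j := by
    intro i j
    have h1 : ((b i : Fin n → ℂ)) = -J (J (b i)) := by rw [hJJ]; simp
    calc P j i = star (J (b j)) ⬝ᵥ ((b i : Fin n → ℂ)) := rfl
      _ = star (J (b j)) ⬝ᵥ (-(J (J (b i)))) := by rw [← h1]
      _ = -(star (J (b j)) ⬝ᵥ J (J (b i))) := by rw [dotProduct_neg]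
      _ = -(star (J (b i)) ⬝ᵥ ((b j : Fin n → ℂ))) := by rw [hinner]
      _ = -P i j := rfl
  have hdet : P.det ≠ 0 := by
    intro h0
    obtain ⟨c, hc0, hc⟩ := (Matrix.exists_mulVec_eq_zero_iff).mpr h0
    set wV : V := ∑ j, c j • b j with hwV
    have hwcoe : (wV : Fin n → ℂ) = ∑ j, c j • ((b j : Fin n → ℂ)) := by
      simp [hwV]
    have hw : ∀ i, star (J ((b i : Fin n → ℂ))) ⬝ᵥ (wV : Fin n → ℂ) = 0 := by
      intro i
      have h := congrFun hc i
      simp only [Matrix.mulVec, dotProduct, Pi.zero_apply] at h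
      rw [hwcoe, dotProduct_sum']
      have hterm : ∀ j, star (J ((b i : Fin n → ℂ))) ⬝ᵥ (c j • ((b j : Fin n → ℂ)))
          = P i j * c j := by
        intro j
        rw [dotProduct_smul, ← hPij, smul_eq_mul, mul_comm]
      rw [Finset.sum_congr rfl fun j _ => hterm j]
      exact h
    have hworth : ∀ x ∈ V, star (J x) ⬝ᵥ (wV : Fin n → ℂ) = 0 := by
      intro x hx
      have hrepr : x = ∑ i, (b.repr ⟨x, hx⟩ i) • ((b i : Fin n → ℂ)) := by
        conv_lhs => rw [show x = ((⟨x, hx⟩ : V) : Fin n → ℂ) from rfl,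
          ← b.sum_repr ⟨x, hx⟩]
        simp only [Submodule.coe_sum, Submodule.coe_smul]
      rw [hrepr, hJsum, star_sum, sum_dotProduct']
      refine Finset.sum_eq_zero fun i _ => ?_
      rw [star_smul, smul_dotProduct, hw i, smul_zero]
    have hJw : A.mulVec (star (wV : Fin n → ℂ)) ∈ V := hV _ wV.2
    have hx : -J (wV : Fin n → ℂ) ∈ V := V.neg_mem hJw
    have h0' := hworth _ hx
    rw [hJneg, hJJ, neg_neg] at h0'
    have hwzero : (wV : Fin n → ℂ) = 0 := star_self_dot_zero _ h0'
    have hz : wV = 0 := Subtype.ext hwzero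
    rw [hwV] at hz
    have hlin := b.linearIndependent
    rw [Fintype.linearIndependent_iff] at hlin
    exact hc0 (funext (hlin c hz))
  have hpow : ((-1 : ℂ)) ^ d = 1 := by
    have hT : Pᵀ = -P := by
      ext i j
      simp only [Matrix.transpose_apply, Matrix.neg_apply]
      exact hskew i j
    have h1 : P.det = (-1 : ℂ) ^ d * P.det := by
      calc P.det = Pᵀ.det := (Matrix.det_transpose P).symm
        _ = (-P).det := by rw [hT]
        _ = (-1 : ℂ) ^ d * P.det := by rw [Matrix.det_neg, Fintype.card_fin]
    exact mul_right_cancel₀ hdet (by rw [one_mul, ← h1])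
  exact (neg_one_pow_eq_one_iff_even (by norm_num : (-1 : ℂ) ≠ 1)).mp hpow

end KramersAux

/-- Kramers-type degeneracy: if `T0² = e` and `ω(T0,T0) = −1`, then
`ρ(T0)² = −id`, every Hermitian matrix commuting with `ρ(T0)` has all eigenvalue
multiplicities even, and the dimension `n` is even. -/
theorem kramers_degeneracy {G : Type*} [Group G] [Fintype G]
    (s : G →* ℤˣ) (hs : Function.Surjective s)
    (T0 : G) (hT0 : s T0 = -1) (hT0sq : T0 * T0 = 1)
    {n : ℕ}
    (M : G → Matrix (Fin n) (Fin n) ℂ) (ω : G → G → ℂ)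
    (hM : IsUnitaryCoRep s M ω)
    (hone : ω 1 1 = 1) (hmin : ω T0 T0 = -1) :
    (∀ v : Fin n → ℂ, rho s M T0 (rho s M T0 v) = -v) ∧
    (∀ Hm : Matrix (Fin n) (Fin n) ℂ, Hm.IsHermitian →
      Hm * M T0 = M T0 * Hm.map (starRingEnd ℂ) →
      ∀ lam : ℂ, Even (Module.finrank ℂ (eigSpace Hm lam))) ∧
    Even n := by
  classical
  set A := M T0 with hAdef
  have hAu : A ∈ Matrix.unitaryGroup (Fin n) ℂ := hM.unitary T0
  have hs1 : s (1 : G) = 1 := map_one s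
  have hM1 : M 1 = 1 := by
    have h := hM.toIsCoRep.mul_eq 1 1
    rw [hs1] at h
    simp [mconj, hone] at h
    have h2 : M 1 * M 1 = M 1 * 1 := by rw [mul_one]; exact h
    exact (hM.toIsCoRep.isUnit 1).mul_left_cancel h2
  have hkey : A * A.map (starRingEnd ℂ) = -1 := by
    have h := hM.toIsCoRep.mul_eq T0 T0
    rw [hT0] at h
    rw [mconj, if_neg (by decide : ¬((-1 : ℤˣ) = 1))] at h
    rw [hT0sq, hM1, hmin] at h
    rw [h]
    simp
  have hA2 : ∀ v : Fin n → ℂ, A.mulVec (star (A.mulVec (star v))) = -v := by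
    intro v
    rw [KramersAux.star_mulVec_conj, star_star, Matrix.mulVec_mulVec, hkey,
      Matrix.neg_mulVec, Matrix.one_mulVec]
  have part1 : ∀ v : Fin n → ℂ, rho s M T0 (rho s M T0 v) = -v := by
    intro v
    simp only [rho, hT0, vconj, if_neg (by decide : ¬((-1 : ℤˣ) = 1))]
    exact hA2 v
  have part2 : ∀ Hm : Matrix (Fin n) (Fin n) ℂ, Hm.IsHermitian →
      Hm * M T0 = M T0 * Hm.map (starRingEnd ℂ) →
      ∀ lam : ℂ, Even (Module.finrank ℂ (eigSpace Hm lam)) := by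
    intro Hm hHerm hcomm lam
    by_cases hbot : eigSpace Hm lam = ⊥
    · rw [hbot]
      simp
    · obtain ⟨v, hvmem, hvne⟩ := Submodule.exists_mem_ne_zero_of_ne_bot hbot
      have hv : Hm.mulVec v = lam • v := hvmem
      have hvv : star v ⬝ᵥ v ≠ 0 := fun h => hvne (KramersAux.star_self_dot_zero v h)
      have hreal : (starRingEnd ℂ) lam = lam := by
        have e1 : star v ⬝ᵥ Hm.mulVec v = lam * (star v ⬝ᵥ v) := by
          rw [hv, dotProduct_smul, smul_eq_mul]
        have e2 : star v ⬝ᵥ Hm.mulVec v = (starRingEnd ℂ) lam * (star v ⬝ᵥ v) := by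
          rw [Matrix.dotProduct_mulVec]
          have hvm : Matrix.vecMul (star v) Hm = star (Hm.mulVec v) := by
            rw [Matrix.star_mulVec, hHerm.eq]
          rw [hvm, hv, star_smul, smul_dotProduct, smul_eq_mul]
          rfl
        have h12 := e1.symm.trans e2
        exact (mul_right_cancel₀ hvv h12).symm
      have hinv : ∀ w ∈ eigSpace Hm lam, A.mulVec (star w) ∈ eigSpace Hm lam := by
        intro w hw
        have hw' : Hm.mulVec w = lam • w := hw
        rw [mem_eigSpace]
        rw [Matrix.mulVec_mulVec, hAdef, hcomm, ← hAdef, ← Matrix.mulVec_mulVec]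
        have hst : (Hm.map (starRingEnd ℂ)).mulVec (star w) = star (Hm.mulVec w) := by
          rw [KramersAux.star_mulVec_conj]
        rw [hst, hw', star_smul, Matrix.mulVec_smul]
        rw [show (star lam : ℂ) = (starRingEnd ℂ) lam from rfl, hreal]
      exact KramersAux.even_finrank_of_quaternionic A hAu hA2 (eigSpace Hm lam) hinv
  refine ⟨part1, part2, ?_⟩
  have h0comm : (0 : Matrix (Fin n) (Fin n) ℂ) * M T0
      = M T0 * (0 : Matrix (Fin n) (Fin n) ℂ).map (starRingEnd ℂ) := by
    simp
  have h := part2 0 Matrix.isHermitian_zero h0comm 0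
  have heq : eigSpace (0 : Matrix (Fin n) (Fin n) ℂ) 0 = ⊤ := by
    ext v
    simp [mem_eigSpace, Matrix.zero_mulVec]
  rw [heq] at h
  rw [finrank_top] at h
  simpa [Module.finrank_fintype_fun_eq_card] using h


end
end
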